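/- Let p be a prime and i, m positive integers such that m / gcd(i,m) is even. Then gcd(p^i + 1, p^m - 1) = p^{gcd(i,m)} + 1. -/
import Mathlib

theorem stmt_3 (p i m : ℕ) (hp : p.Prime) (hi : 0 < i) (hm : 0 < m)
    (h : Even (m / Nat.gcd i m)) :
    Nat.gcd (p ^ i + 1) (p ^ m - 1) = p ^ Nat.gcd i m + 1 := by
  have hp2 : 2 ≤ p := hp.two_le
  set d := Nat.gcd i m with hd
  have hd_pos : 0 < d := Nat.gcd_pos_of_pos_left m hi
  have hdi : d ∣ i := Nat.gcd_dvd_left i m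
  have hdm : d ∣ m := Nat.gcd_dvd_right i m
  set t := i / d with ht
  have hit : i = d * t := (Nat.mul_div_cancel' hdi).symm
  -- t is odd
  have ht_odd : Odd t := by
    rcases Nat.even_or_odd t with he | ho
    · exfalso
      have h2 : 2 ∣ Nat.gcd (i / d) (m / d) := Nat.dvd_gcd he.two_dvd h.two_dvd
      rw [Nat.coprime_div_gcd_div_gcd hd_pos] at h2
      omega
    · exact ho
  -- 2*d divides m
  have h2dm : 2 * d ∣ m := by
    obtain ⟨k, hk⟩ := h
    have : m = d * (k + k) := by
      rw [← hk, Nat.mul_div_cancel' hdm]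
    exact ⟨k, by rw [this]; ring⟩
  -- gcd(2i, m) = 2d
  have hgcd2 : Nat.gcd (2 * i) m = 2 * d := by
    apply Nat.dvd_antisymm
    · have : Nat.gcd (2 * i) m ∣ Nat.gcd (2 * i) (2 * m) :=
        Nat.dvd_gcd (Nat.gcd_dvd_left _ _) ((Nat.gcd_dvd_right _ _).mul_left 2)
      rwa [Nat.gcd_mul_left] at this
    · exact Nat.dvd_gcd (mul_dvd_mul_left 2 hdi) h2dm
  set g := Nat.gcd (p ^ i + 1) (p ^ m - 1) with hg
  have hpm1 : 1 ≤ p ^ m := Nat.one_le_pow _ _ (by omega)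
  have hg_pos : 0 < g := Nat.gcd_pos_of_pos_left _ (by positivity)
  have : NeZero g := ⟨hg_pos.ne'⟩
  have hgi : g ∣ p ^ i + 1 := Nat.gcd_dvd_left _ _
  have hgm : g ∣ p ^ m - 1 := Nat.gcd_dvd_right _ _
  -- work in ZMod g
  have hui : ((p : ZMod g)) ^ i = -1 := by
    have h0 : ((p ^ i + 1 : ℕ) : ZMod g) = 0 :=
      (ZMod.natCast_eq_zero_iff _ _).mpr hgi
    push_cast at h0
    linear_combination h0
  have hum : ((p : ZMod g)) ^ m = 1 := by
    have h0 : ((p ^ m - 1 : ℕ) : ZMod g) = 0 :=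
      (ZMod.natCast_eq_zero_iff _ _).mpr hgm
    rw [Nat.cast_sub hpm1] at h0
    push_cast at h0
    linear_combination h0
  have hu2i : ((p : ZMod g)) ^ (2 * i) = 1 := by
    rw [mul_comm, pow_mul, hui]
    ring
  -- order argument: p^(2d) = 1 in ZMod g
  have hu2d : ((p : ZMod g)) ^ (2 * d) = 1 := by
    rw [← hgcd2]
    have h1 : orderOf ((p : ZMod g)) ∣ 2 * i := orderOf_dvd_of_pow_eq_one hu2i
    have h2 : orderOf ((p : ZMod g)) ∣ m := orderOf_dvd_of_pow_eq_one hum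
    exact orderOf_dvd_iff_pow_eq_one.mp (Nat.dvd_gcd h1 h2)
  -- deduce p^d = -1 in ZMod g
  have hud : ((p : ZMod g)) ^ d = -1 := by
    obtain ⟨s, hs⟩ := ht_odd
    have hcalc : ((p : ZMod g)) ^ i = (((p : ZMod g)) ^ (2 * d)) ^ s * ((p : ZMod g)) ^ d := by
      rw [← pow_mul, ← pow_add]
      congr 1
      rw [hit, hs]
      ring
    rw [hui, hu2d, one_pow, one_mul] at hcalc
    exact hcalc.symm
  -- hence g ∣ p^d + 1
  have hg_dvd : g ∣ p ^ d + 1 := by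
    rw [← ZMod.natCast_eq_zero_iff]
    push_cast
    rw [hud]
    ring
  -- conversely p^d + 1 ∣ g
  have hdvd_i : p ^ d + 1 ∣ p ^ i + 1 := by
    have := ht_odd.nat_add_dvd_pow_add_pow (p ^ d) 1
    simpa [← pow_mul, ← hit] using this
  have hdvd_m : p ^ d + 1 ∣ p ^ m - 1 := by
    have h1 : p ^ d + 1 ∣ p ^ (2 * d) - 1 := by
      have heq : p ^ (2 * d) - 1 = (p ^ d + 1) * (p ^ d - 1) := by
        have := Nat.sq_sub_sq (p ^ d) 1
        simpa [mul_comm 2 d, pow_mul] using this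
      rw [heq]
      exact Dvd.intro _ rfl
    have h2 : p ^ (2 * d) - 1 ∣ p ^ m - 1 := by
      obtain ⟨k, hk⟩ := h2dm
      have h3 := Nat.sub_dvd_pow_sub_pow (p ^ (2 * d)) 1 k
      rw [one_pow, ← pow_mul] at h3
      rwa [hk]
    exact h1.trans h2
  exact Nat.dvd_antisymm hg_dvd (Nat.dvd_gcd hdvd_i hdvd_m)
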